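/- Let g ∈ C²(ℝ) with g, g', g'' ∈ L¹(ℝ, dx), and let Δx > 0. Then |∑_{l∈ℤ} g(l·Δx)·Δx − ∫_ℝ g(x) dx| ≤ (Δx²/12) · ‖g''‖_{L¹(ℝ)}. -/

import Mathlib

set_option maxHeartbeats 1000000

open MeasureTheory Set intervalIntegral

lemma key_ibp (g : ℝ → ℝ) (hdg : Differentiable ℝ g) (hdg' : Differentiable ℝ (deriv g))
    (hcg'' : Continuous (deriv (deriv g))) (Δx a : ℝ) :
    ∫ x in a..(a+Δx), ((x-a)*(x-(a+Δx))/2 + Δx^2/12) * deriv (deriv g) x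
      = Δx^2/12*(deriv g (a+Δx) - deriv g a) - Δx/2*(g (a+Δx) + g a)
        + ∫ x in a..(a+Δx), g x := by
  have hu : ∀ x ∈ uIcc a (a+Δx), HasDerivAt
      (fun x => (x-a)*(x-(a+Δx))/2 + Δx^2/12) (x - a - Δx/2) x := by
    intro x _
    have h := ((((hasDerivAt_id x).sub_const a).mul
      ((hasDerivAt_id x).sub_const (a+Δx))).div_const 2).add_const (Δx^2/12)
    have e : x - a - Δx/2 = (1 * (id x - (a + Δx)) + (id x - a) * 1) / 2 := by
      simp only [id_eq]; ring
    rw [e]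
    exact h
  have hv : ∀ x ∈ uIcc a (a+Δx), HasDerivAt (deriv g) (deriv (deriv g) x) x :=
    fun x _ => (hdg' x).hasDerivAt
  have hu' : IntervalIntegrable (fun x => x - a - Δx/2) volume a (a+Δx) :=
    (by fun_prop : Continuous fun x : ℝ => x - a - Δx/2).intervalIntegrable _ _
  have h1 := integral_mul_deriv_eq_deriv_mul hu hv hu' (hcg''.intervalIntegrable _ _)
  have hu2 : ∀ x ∈ uIcc a (a+Δx), HasDerivAt (fun x => x - a - Δx/2) 1 x := by
    intro x _
    simpa using ((hasDerivAt_id x).sub_const a).sub_const (Δx/2)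
  have hv2 : ∀ x ∈ uIcc a (a+Δx), HasDerivAt g (deriv g x) x :=
    fun x _ => (hdg x).hasDerivAt
  have h2 := integral_mul_deriv_eq_deriv_mul hu2 hv2
    ((continuous_const).intervalIntegrable _ _)
    ((hdg'.continuous).intervalIntegrable _ _)
  simp only [one_mul] at h2
  rw [h1, h2]
  ring_nf

lemma kernel_bound {Δx a x : ℝ} (hΔx : 0 < Δx) (hx : x ∈ Icc a (a+Δx)) :
    |(x-a)*(x-(a+Δx))/2 + Δx^2/12| ≤ Δx^2/12 := by
  obtain ⟨h1, h2⟩ := hx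
  rw [abs_le]
  constructor <;> nlinarith [sq_nonneg (x - a - Δx/2)]

lemma union_Ioc (Δx : ℝ) (hΔx : 0 < Δx) :
    (⋃ l : ℤ, Ioc ((l:ℝ)*Δx) (((l:ℤ)+1:ℤ)*Δx : ℝ)) = univ := by
  ext x
  simp only [mem_iUnion, mem_Ioc, mem_univ, iff_true]
  refine ⟨⌈x/Δx⌉ - 1, ?_, ?_⟩
  · have h : ((⌈x/Δx⌉ : ℝ) - 1) < x/Δx := by
      have := Int.ceil_lt_add_one (x/Δx)
      linarith
    push_cast
    calc ((⌈x/Δx⌉:ℝ) - 1) * Δx < (x/Δx) * Δx := by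
          exact mul_lt_mul_of_pos_right h hΔx
      _ = x := by field_simp
  · have h : x/Δx ≤ (⌈x/Δx⌉ : ℝ) := Int.le_ceil _
    push_cast
    calc x = (x/Δx) * Δx := by field_simp
      _ ≤ (⌈x/Δx⌉:ℝ) * Δx := mul_le_mul_of_nonneg_right h hΔx.le
      _ = ((⌈x/Δx⌉:ℝ) - 1 + 1) * Δx := by ring

lemma disj_Ioc (Δx : ℝ) (hΔx : 0 < Δx) :
    Pairwise (Function.onFun Disjoint fun l : ℤ => Ioc ((l:ℝ)*Δx) (((l:ℤ)+1:ℤ)*Δx : ℝ)) := by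
  intro i j hij
  simp only [Function.onFun]
  rw [Set.Ioc_disjoint_Ioc]
  rcases lt_or_gt_of_ne hij with h | h
  · have hij' : (i:ℝ) + 1 ≤ (j:ℝ) := by exact_mod_cast h
    push_cast
    calc min (((i:ℝ)+1)*Δx) (((j:ℝ)+1)*Δx) ≤ ((i:ℝ)+1)*Δx := min_le_left _ _
      _ ≤ (j:ℝ)*Δx := by nlinarith
      _ ≤ max ((i:ℝ)*Δx) ((j:ℝ)*Δx) := le_max_right _ _
  · have hij' : (j:ℝ) + 1 ≤ (i:ℝ) := by exact_mod_cast h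
    push_cast
    calc min (((i:ℝ)+1)*Δx) (((j:ℝ)+1)*Δx) ≤ ((j:ℝ)+1)*Δx := min_le_right _ _
      _ ≤ (i:ℝ)*Δx := by nlinarith
      _ ≤ max ((i:ℝ)*Δx) ((j:ℝ)*Δx) := le_max_left _ _

lemma hasSum_setInt (f : ℝ → ℝ) (hf : Integrable f) (Δx : ℝ) (hΔx : 0 < Δx) :
    HasSum (fun l : ℤ => ∫ x in Ioc ((l:ℝ)*Δx) (((l:ℤ)+1:ℤ)*Δx : ℝ), f x) (∫ x, f x) := by
  have h := hasSum_integral_iUnion (μ := volume) (f := f)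
    (s := fun l : ℤ => Ioc ((l:ℝ)*Δx) (((l:ℤ)+1:ℤ)*Δx : ℝ))
    (fun _ => measurableSet_Ioc) (disj_Ioc Δx hΔx)
    (by rw [union_Ioc Δx hΔx]; exact hf.integrableOn)
  rwa [union_Ioc Δx hΔx, setIntegral_univ] at h

lemma summable_samples (f : ℝ → ℝ) (hdf : Differentiable ℝ f) (hf : Integrable f)
    (hf' : Integrable (deriv f)) (hcf' : Continuous (deriv f))
    (Δx : ℝ) (hΔx : 0 < Δx) : Summable (fun l : ℤ => f (l * Δx)) := by
  set F : ℝ → ℝ := fun x => |f x| + Δx * |deriv f x| with hF_def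
  have hF : Integrable F := hf.abs.add ((hf'.abs).const_mul Δx)
  have hsum := hasSum_setInt F hF Δx hΔx
  -- key pointwise bound
  have key : ∀ l : ℤ, Δx * |f (l * Δx)| ≤ ∫ x in Ioc ((l:ℝ)*Δx) (((l:ℤ)+1:ℤ)*Δx : ℝ), F x := by
    intro l
    set a : ℝ := (l:ℝ) * Δx with ha
    have hb : (((l:ℤ)+1:ℤ)*Δx : ℝ) = a + Δx := by push_cast; ring
    have hab : a ≤ a + Δx := by linarith
    set P : ℝ → ℝ := fun x => ∫ t in a..x, deriv f t with hP_def
    have hPcont : Continuous P :=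
      intervalIntegral.continuous_primitive (fun c d => hcf'.intervalIntegrable c d) a
    have hfa : ∀ x, f a = f x - P x := by
      intro x
      have := intervalIntegral.integral_deriv_eq_sub
        (f := f) (a := a) (b := x) (fun t _ => hdf t) (hcf'.intervalIntegrable _ _)
      simp only [hP_def]
      linarith [this]
    have h1 : ∫ x in a..(a+Δx), f a = Δx * f a := by
      rw [intervalIntegral.integral_const]; simp
    have h2 : ∫ x in a..(a+Δx), f a = (∫ x in a..(a+Δx), f x) - ∫ x in a..(a+Δx), P x := by
      rw [← intervalIntegral.integral_sub hf.intervalIntegrable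
        (hPcont.intervalIntegrable _ _)]
      exact intervalIntegral.integral_congr fun x _ => hfa x
    have hPbound : ∀ x ∈ Icc a (a+Δx), |P x| ≤ ∫ t in a..(a+Δx), |deriv f t| := by
      intro x hx
      calc |P x| ≤ ∫ t in a..x, |deriv f t| :=
            intervalIntegral.abs_integral_le_integral_abs hx.1
        _ ≤ ∫ t in a..(a+Δx), |deriv f t| := by
            apply intervalIntegral.integral_mono_interval le_rfl hx.1 hx.2
            · exact Filter.Eventually.of_forall fun t => abs_nonneg _
            · exact (hcf'.abs).intervalIntegrable _ _
    have h3 : |∫ x in a..(a+Δx), P x| ≤ Δx * ∫ t in a..(a+Δx), |deriv f t| := by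
      calc |∫ x in a..(a+Δx), P x| ≤ ∫ x in a..(a+Δx), |P x| :=
            intervalIntegral.abs_integral_le_integral_abs hab
        _ ≤ ∫ x in a..(a+Δx), (∫ t in a..(a+Δx), |deriv f t|) := by
            apply intervalIntegral.integral_mono_on hab
              ((hPcont.abs).intervalIntegrable _ _)
              (intervalIntegrable_const) hPbound
        _ = Δx * ∫ t in a..(a+Δx), |deriv f t| := by
            rw [intervalIntegral.integral_const]; simp
    have h4 : |∫ x in a..(a+Δx), f x| ≤ ∫ x in a..(a+Δx), |f x| :=
      intervalIntegral.abs_integral_le_integral_abs hab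
    have h5 : ∫ x in Ioc a (a+Δx), F x
        = (∫ x in a..(a+Δx), |f x|) + Δx * ∫ t in a..(a+Δx), |deriv f t| := by
      rw [← intervalIntegral.integral_of_le hab, hF_def]
      rw [intervalIntegral.integral_add (hf.abs).intervalIntegrable
        ((hf'.abs).const_mul Δx).intervalIntegrable]
      rw [intervalIntegral.integral_const_mul]
    rw [hb, h5]
    have : Δx * f a = (∫ x in a..(a+Δx), f x) - ∫ x in a..(a+Δx), P x := by
      rw [← h1, h2]
    calc Δx * |f a| = |Δx * f a| := by rw [abs_mul, abs_of_pos hΔx]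
      _ = |(∫ x in a..(a+Δx), f x) - ∫ x in a..(a+Δx), P x| := by rw [this]
      _ ≤ |∫ x in a..(a+Δx), f x| + |∫ x in a..(a+Δx), P x| := abs_sub _ _
      _ ≤ (∫ x in a..(a+Δx), |f x|) + Δx * ∫ t in a..(a+Δx), |deriv f t| := by
          exact add_le_add h4 h3
  have habs : Summable (fun l : ℤ => |f (l * Δx)|) := by
    apply Summable.of_nonneg_of_le (fun l => abs_nonneg _)
      (fun l => ?_) (hsum.summable.mul_left Δx⁻¹)
    rw [le_inv_mul_iff₀ hΔx]
    exact key l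
  exact habs.of_abs

/-- Riemann-sum error estimate: if g ∈ C²(ℝ) with g, g', g'' ∈ L¹, then for any
step Δx > 0, |∑_{l∈ℤ} g(lΔx)Δx − ∫ g| ≤ (Δx²/12)‖g''‖_{L¹}. -/
theorem riemann_sum_error_le
    (g : ℝ → ℝ) (hg : ContDiff ℝ 2 g)
    (h0 : Integrable g) (h1 : Integrable (deriv g))
    (h2 : Integrable (deriv (deriv g)))
    (Δx : ℝ) (hΔx : 0 < Δx) :
    |(∑' l : ℤ, g (l * Δx) * Δx) - ∫ x : ℝ, g x| ≤
      Δx ^ 2 / 12 * ∫ x : ℝ, |deriv (deriv g) x| := by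
  -- regularity
  obtain ⟨hdg, hdg', hcg''⟩ : Differentiable ℝ g ∧ Differentiable ℝ (deriv g)
      ∧ Continuous (deriv (deriv g)) := by
    have h2' : ContDiff ℝ (1+1) g := by norm_num at hg ⊢; exact hg
    rw [contDiff_succ_iff_deriv] at h2'
    obtain ⟨hd, -, h1'⟩ := h2'
    rw [contDiff_one_iff_deriv] at h1'
    exact ⟨hd, h1'.1, h1'.2⟩
  set E : ℤ → ℝ := fun l =>
    ∫ x in ((l:ℝ)*Δx)..((l:ℝ)*Δx+Δx),
      ((x-(l:ℝ)*Δx)*(x-((l:ℝ)*Δx+Δx))/2 + Δx^2/12) * deriv (deriv g) x with hE_def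
  have hb : ∀ l : ℤ, (((l:ℤ)+1:ℤ)*Δx : ℝ) = (l:ℝ)*Δx + Δx := by
    intro l; push_cast; ring
  have identity : ∀ l : ℤ, ∫ x in Ioc ((l:ℝ)*Δx) (((l:ℤ)+1:ℤ)*Δx : ℝ), g x
      = Δx/2*(g ((((l:ℤ)+1:ℤ):ℝ)*Δx) + g ((l:ℝ)*Δx))
        - Δx^2/12*(deriv g ((((l:ℤ)+1:ℤ):ℝ)*Δx) - deriv g ((l:ℝ)*Δx)) + E l := by
    intro l
    have hab : (l:ℝ)*Δx ≤ (l:ℝ)*Δx + Δx := by linarith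
    rw [hb l, ← intervalIntegral.integral_of_le hab]
    have hkey := key_ibp g hdg hdg' hcg'' Δx ((l:ℝ)*Δx)
    have hE : E l = ∫ x in ((l:ℝ)*Δx)..((l:ℝ)*Δx+Δx),
        ((x-(l:ℝ)*Δx)*(x-((l:ℝ)*Δx+Δx))/2 + Δx^2/12) * deriv (deriv g) x := rfl
    rw [hE, hkey]
    ring
  -- bound for E
  have Ebound : ∀ l : ℤ, |E l| ≤ Δx^2/12 * ∫ x in Ioc ((l:ℝ)*Δx) (((l:ℤ)+1:ℤ)*Δx : ℝ),
      |deriv (deriv g) x| := by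
    intro l
    set a : ℝ := (l:ℝ)*Δx
    have hab : a ≤ a + Δx := by linarith
    have hKcont : Continuous fun x : ℝ => (x-a)*(x-(a+Δx))/2 + Δx^2/12 := by fun_prop
    calc |E l| ≤ ∫ x in a..(a+Δx), |((x-a)*(x-(a+Δx))/2 + Δx^2/12) * deriv (deriv g) x| :=
          intervalIntegral.abs_integral_le_integral_abs hab
      _ ≤ ∫ x in a..(a+Δx), Δx^2/12 * |deriv (deriv g) x| := by
          apply intervalIntegral.integral_mono_on hab
            (((hKcont.mul hcg'').abs).intervalIntegrable _ _)
            ((continuous_const.mul hcg''.abs).intervalIntegrable _ _)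
          intro x hx
          simp only [Pi.mul_apply]
          rw [abs_mul]
          exact mul_le_mul_of_nonneg_right (kernel_bound hΔx hx) (abs_nonneg _)
      _ = Δx^2/12 * ∫ x in Ioc a (a + Δx), |deriv (deriv g) x| := by
          rw [intervalIntegral.integral_const_mul, intervalIntegral.integral_of_le hab]
    rw [hb l]
  -- sums
  have hg_int := hasSum_setInt g h0 Δx hΔx
  have hG2 := hasSum_setInt (fun x => |deriv (deriv g) x|) h2.abs Δx hΔx
  have S0 : Summable (fun l : ℤ => g ((l:ℝ) * Δx)) :=
    summable_samples g hdg h0 h1 hdg'.continuous Δx hΔx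
  have S1 : Summable (fun l : ℤ => deriv g ((l:ℝ) * Δx)) :=
    summable_samples (deriv g) hdg' h1 h2 hcg'' Δx hΔx
  have S0' : Summable (fun l : ℤ => g ((((l:ℤ)+1:ℤ):ℝ) * Δx)) := by
    have h := ((Equiv.addRight (1:ℤ)).summable_iff
      (f := fun l : ℤ => g ((l:ℝ) * Δx))).mpr S0
    refine h.congr fun l => ?_
    simp only [Function.comp_apply, Equiv.coe_addRight]
  have S1' : Summable (fun l : ℤ => deriv g ((((l:ℤ)+1:ℤ):ℝ) * Δx)) := by
    have h := ((Equiv.addRight (1:ℤ)).summable_iff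
      (f := fun l : ℤ => deriv g ((l:ℝ) * Δx))).mpr S1
    refine h.congr fun l => ?_
    simp only [Function.comp_apply, Equiv.coe_addRight]
  have hshift0 : ∑' l : ℤ, g ((((l:ℤ)+1:ℤ):ℝ) * Δx) = ∑' l : ℤ, g ((l:ℝ) * Δx) := by
    rw [← (Equiv.addRight (1:ℤ)).tsum_eq (fun l : ℤ => g ((l:ℝ) * Δx))]
    refine tsum_congr fun l => ?_
    simp only [Equiv.coe_addRight]
  have hshift1 : ∑' l : ℤ, deriv g ((((l:ℤ)+1:ℤ):ℝ) * Δx)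
      = ∑' l : ℤ, deriv g ((l:ℝ) * Δx) := by
    rw [← (Equiv.addRight (1:ℤ)).tsum_eq (fun l : ℤ => deriv g ((l:ℝ) * Δx))]
    refine tsum_congr fun l => ?_
    simp only [Equiv.coe_addRight]
  -- summability of E
  have Dsum : Summable (fun l : ℤ => Δx^2/12 * ∫ x in Ioc ((l:ℝ)*Δx) (((l:ℤ)+1:ℤ)*Δx : ℝ),
      |deriv (deriv g) x|) := hG2.summable.mul_left _
  have SEabs : Summable (fun l : ℤ => |E l|) :=
    Summable.of_nonneg_of_le (fun l => abs_nonneg _) Ebound Dsum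
  have SE : Summable E := SEabs.of_abs
  -- combine HasSum
  set T : ℝ := ∑' l : ℤ, g ((l:ℝ) * Δx) with hT
  have HA : HasSum (fun l : ℤ => Δx/2*(g ((((l:ℤ)+1:ℤ):ℝ)*Δx) + g ((l:ℝ)*Δx)))
      (Δx * T) := by
    have := (S0'.hasSum.add S0.hasSum).mul_left (Δx/2)
    rw [hshift0] at this
    have e : Δx * T = Δx / 2 * (T + ∑' b : ℤ, g ((b:ℝ) * Δx)) := by ring
    rw [e]
    exact this
  have HB : HasSum (fun l : ℤ =>
      Δx^2/12*(deriv g ((((l:ℤ)+1:ℤ):ℝ)*Δx) - deriv g ((l:ℝ)*Δx))) 0 := by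
    have := (S1'.hasSum.sub S1.hasSum).mul_left (Δx^2/12)
    rw [hshift1, sub_self, mul_zero] at this
    exact this
  have Htot : HasSum (fun l : ℤ => ∫ x in Ioc ((l:ℝ)*Δx) (((l:ℤ)+1:ℤ)*Δx : ℝ), g x)
      (Δx * T - 0 + ∑' l, E l) := by
    have hfun : (fun l : ℤ => ∫ x in Ioc ((l:ℝ)*Δx) (((l:ℤ)+1:ℤ)*Δx : ℝ), g x)
        = fun l : ℤ => Δx/2*(g ((((l:ℤ)+1:ℤ):ℝ)*Δx) + g ((l:ℝ)*Δx))
          - Δx^2/12*(deriv g ((((l:ℤ)+1:ℤ):ℝ)*Δx) - deriv g ((l:ℝ)*Δx)) + E l :=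
      funext identity
    rw [hfun]
    exact (HA.sub HB).add SE.hasSum
  have hint : ∫ x : ℝ, g x = Δx * T + ∑' l, E l := by
    have := hg_int.unique Htot
    linarith [this]
  have hLHS : (∑' l : ℤ, g ((l:ℝ) * Δx) * Δx) = T * Δx := tsum_mul_right
  rw [hLHS, hint]
  have h1 : T * Δx - (Δx * T + ∑' l, E l) = -(∑' l, E l) := by ring
  rw [h1, abs_neg]
  have h2 : |∑' l, E l| ≤ ∑' l, |E l| := by
    have := norm_tsum_le_tsum_norm (f := E) (by simpa only [Real.norm_eq_abs] using SEabs)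
    simpa only [Real.norm_eq_abs] using this
  have h3 : (∑' l : ℤ, |E l|) ≤ ∑' l : ℤ, Δx^2/12 * ∫ x in Ioc ((l:ℝ)*Δx)
      (((l:ℤ)+1:ℤ)*Δx : ℝ), |deriv (deriv g) x| := Summable.tsum_le_tsum Ebound SEabs Dsum
  have h4 : (∑' l : ℤ, Δx^2/12 * ∫ x in Ioc ((l:ℝ)*Δx) (((l:ℤ)+1:ℤ)*Δx : ℝ),
      |deriv (deriv g) x|) = Δx^2/12 * ∫ x : ℝ, |deriv (deriv g) x| :=
    (hG2.mul_left (Δx^2/12)).tsum_eq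
  linarith
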